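/- Let x ∈ ℝ^n, let T₀ be a set of s indices containing the s largest-magnitude entries of x, and let T̃ ⊆ {1,…,n} be an arbitrary set with |T̃| = ρs and |T̃ ∩ T₀| = αρs. Fix w ∈ [0,1] and set b = w + (1−w)√(1 + ρ − 2αρ). Suppose a > 1 with as a positive integer, (1−α)ρ ≤ a, A ∈ ℝ^{m×n} satisfies the restricted isometry bound with constant δ_{as} at level as and with constant δ_{(a+1)s} at level (a+1)s, and δ_{as} + (a/b²)·δ_{(a+1)s} < a/b² − 1. Let y = Ax + z with ‖z‖₂ ≤ ε, and let x̂ satisfy ‖Ax̂ − y‖₂ ≤ ε and w‖x̂_{T̃}‖₁ + ‖x̂_{T̃ᶜ}‖₁ ≤ w‖x_{T̃}‖₁ + ‖x_{T̃ᶜ}‖₁. Then ‖x̂ − x‖₂ ≤ C₀ε + C₁s^{−1/2}( w‖x_{T₀ᶜ}‖₁ + (1−w)‖x_{T̃ᶜ∩T₀ᶜ}‖₁ ), where C₀ = 2(1 + b/√a)/(√(1−δ_{(a+1)s}) − (b/√a)√(1+δ_{as})) and C₁ = 2a^{−1/2}(√(1−δ_{(a+1)s}) + √(1+δ_{as}))/(√(1−δ_{(a+1)s})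 − (b/√a)√(1+δ_{as})). -/

import Mathlib

open Finset

/-- The restriction of a vector to a set of indices: agrees with `x` on `S`, zero elsewhere. -/
noncomputable def restr {n : ℕ} (x : Fin n → ℝ) (S : Finset (Fin n)) : Fin n → ℝ :=
  fun i => if i ∈ S then x i else 0

/-- The ℓ1 norm of a vector in ℝ^n. -/
noncomputable def nrm1 {n : ℕ} (x : Fin n → ℝ) : ℝ := ∑ i, |x i|

/-- The ℓ2 (Euclidean) norm of a vector in ℝ^n. -/
noncomputable def nrm2 {n : ℕ} (x : Fin n → ℝ) : ℝ := Real.sqrt (∑ i, (x i) ^ 2)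

/-- The weighted ℓ1 norm associated with support-estimate sets `T 1, …, T N`
(with weights `w 1, …, w N`), where weight `1` is used off `⋃ i, T i`. -/
noncomputable def wl1 {n : ℕ} (N : ℕ) (T : ℕ → Finset (Fin n)) (w : ℕ → ℝ)
    (x : Fin n → ℝ) : ℝ :=
  ∑ i ∈ Finset.Icc 1 N, w i * nrm1 (restr x (T i)) +
    nrm1 (restr x ((Finset.Icc 1 N).biUnion T)ᶜ)

/-- `A` satisfies the restricted isometry bound with constant `δ` at sparsity level `k`. -/
def RIPBound {m n : ℕ} (A : Matrix (Fin m) (Fin n) ℝ) (δ : ℝ) (k : ℕ) : Prop :=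
  ∀ v : Fin n → ℝ, (Finset.univ.filter fun i => v i ≠ 0).card ≤ k →
    (1 - δ) * (nrm2 v) ^ 2 ≤ (nrm2 (A.mulVec v)) ^ 2 ∧
      (nrm2 (A.mulVec v)) ^ 2 ≤ (1 + δ) * (nrm2 v) ^ 2

/-- The constant `K_N` appearing in the multi-weight recovery guarantee. -/
noncomputable def KN (N : ℕ) (w ρ α : ℕ → ℝ) : ℝ :=
  w N + (1 - w 1) * Real.sqrt (1 + ∑ i ∈ Finset.Icc 1 N, (ρ i - 2 * α i * ρ i)) +
    ∑ j ∈ Finset.Icc 2 N, (w (j - 1) - w j) *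
      Real.sqrt (1 + ∑ i ∈ Finset.Icc j N, (ρ i - 2 * α i * ρ i))

/-- The quantity `D` appearing in the multi-weight error bounds. -/
noncomputable def DD {n : ℕ} (N : ℕ) (T : ℕ → Finset (Fin n)) (T₀ : Finset (Fin n))
    (w : ℕ → ℝ) (x : Fin n → ℝ) : ℝ :=
  (∑ i ∈ Finset.Icc 1 N, w i) * nrm1 (restr x T₀ᶜ) +
    (1 - ∑ i ∈ Finset.Icc 1 N, w i) *
      nrm1 (restr x (((Finset.Icc 1 N).biUnion T)ᶜ ∩ T₀ᶜ)) -
    ∑ i ∈ Finset.Icc 1 N, (∑ j ∈ (Finset.Icc 1 N).erase i, w j) *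
      nrm1 (restr x (T i ∩ T₀ᶜ))

/-- The set `S_j = (T₀ ∪ ⋃_{i=j}^N T̃ᵢ) \ ⋃_{i=j}^N (T̃ᵢ ∩ T₀)`. -/
def SS {n : ℕ} (N : ℕ) (T : ℕ → Finset (Fin n)) (T₀ : Finset (Fin n)) (j : ℕ) :
    Finset (Fin n) :=
  (T₀ ∪ (Finset.Icc j N).biUnion T) \ (Finset.Icc j N).biUnion (fun i => T i ∩ T₀)

lemma nrm2_nonneg {n : ℕ} (x : Fin n → ℝ) : 0 ≤ nrm2 x := Real.sqrt_nonneg _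
lemma nrm1_nonneg {n : ℕ} (x : Fin n → ℝ) : 0 ≤ nrm1 x :=
  Finset.sum_nonneg fun _ _ => abs_nonneg _

lemma nrm2_eq_norm {n : ℕ} (x : Fin n → ℝ) :
    nrm2 x = ‖(WithLp.equiv 2 (Fin n → ℝ)).symm x‖ := by
  rw [EuclideanSpace.norm_eq, nrm2]
  congr 1
  apply Finset.sum_congr rfl
  intro i _
  rw [show ((WithLp.equiv 2 (Fin n → ℝ)).symm x).ofLp i = x i from rfl, Real.norm_eq_abs, sq_abs]

lemma nrm2_add_le {n : ℕ} (x y : Fin n → ℝ) : nrm2 (x + y) ≤ nrm2 x + nrm2 y := by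
  simp only [nrm2_eq_norm]
  exact norm_add_le ((WithLp.equiv 2 (Fin n → ℝ)).symm x) ((WithLp.equiv 2 (Fin n → ℝ)).symm y)

lemma nrm2_neg {n : ℕ} (x : Fin n → ℝ) : nrm2 (-x) = nrm2 x := by
  unfold nrm2; congr 1; apply Finset.sum_congr rfl; intro i _; simp

lemma nrm2_sub_le {n : ℕ} (x y : Fin n → ℝ) : nrm2 (x - y) ≤ nrm2 x + nrm2 y := by
  rw [sub_eq_add_neg]
  exact (nrm2_add_le x (-y)).trans (by rw [nrm2_neg])

lemma nrm2_zero {n : ℕ} : nrm2 (0 : Fin n → ℝ) = 0 := by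
  unfold nrm2; simp

lemma nrm2_list_sum_le {n : ℕ} (L : List (Fin n → ℝ)) :
    nrm2 L.sum ≤ (L.map nrm2).sum := by
  induction L with
  | nil => simp [nrm2_zero]
  | cons a l ih =>
      simp only [List.sum_cons, List.map_cons]
      exact (nrm2_add_le a l.sum).trans (by linarith)

lemma sum_sq_restr {n : ℕ} (x : Fin n → ℝ) (S : Finset (Fin n)) :
    ∑ i, (restr x S i) ^ 2 = ∑ i ∈ S, (x i) ^ 2 := by
  rw [← Finset.sum_filter_add_sum_filter_not Finset.univ (· ∈ S)]
  have h1 : ∀ i ∈ Finset.univ.filter (· ∈ S), (restr x S i)^2 = x i ^ 2 := by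
    intro i hi; simp only [Finset.mem_filter] at hi; simp [restr, hi.2]
  have h2 : ∀ i ∈ Finset.univ.filter (¬ · ∈ S), (restr x S i)^2 = 0 := by
    intro i hi; simp only [Finset.mem_filter] at hi; simp [restr, hi.2]
  rw [Finset.sum_congr rfl h1, Finset.sum_congr rfl h2]
  simp [Finset.filter_mem_eq_inter]

lemma nrm2_restr {n : ℕ} (x : Fin n → ℝ) (S : Finset (Fin n)) :
    nrm2 (restr x S) = Real.sqrt (∑ i ∈ S, (x i) ^ 2) := by
  rw [nrm2, sum_sq_restr]

lemma nrm1_restr {n : ℕ} (x : Fin n → ℝ) (S : Finset (Fin n)) :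
    nrm1 (restr x S) = ∑ i ∈ S, |x i| := by
  unfold nrm1
  rw [← Finset.sum_filter_add_sum_filter_not Finset.univ (· ∈ S)]
  have h1 : ∀ i ∈ Finset.univ.filter (· ∈ S), |restr x S i| = |x i| := by
    intro i hi; simp only [Finset.mem_filter] at hi; simp [restr, hi.2]
  have h2 : ∀ i ∈ Finset.univ.filter (¬ · ∈ S), |restr x S i| = 0 := by
    intro i hi; simp only [Finset.mem_filter] at hi; simp [restr, hi.2]
  rw [Finset.sum_congr rfl h1, Finset.sum_congr rfl h2]
  simp [Finset.filter_mem_eq_inter]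

lemma nrm2_restr_mono {n : ℕ} (x : Fin n → ℝ) {S T : Finset (Fin n)} (h : S ⊆ T) :
    nrm2 (restr x S) ≤ nrm2 (restr x T) := by
  rw [nrm2_restr, nrm2_restr]
  exact Real.sqrt_le_sqrt (Finset.sum_le_sum_of_subset_of_nonneg h
    (fun i _ _ => sq_nonneg _))

lemma nrm1_restr_union {n : ℕ} (x : Fin n → ℝ) {S T : Finset (Fin n)}
    (h : Disjoint S T) :
    nrm1 (restr x (S ∪ T)) = nrm1 (restr x S) + nrm1 (restr x T) := by
  rw [nrm1_restr, nrm1_restr, nrm1_restr, Finset.sum_union h]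

lemma nrm1_split {n : ℕ} (x : Fin n → ℝ) (S : Finset (Fin n)) :
    nrm1 x = nrm1 (restr x S) + nrm1 (restr x Sᶜ) := by
  rw [nrm1_restr, nrm1_restr, nrm1, ← Finset.sum_union (disjoint_compl_right)]
  congr 1
  simp

lemma nrm1_split_inter {n : ℕ} (x : Fin n → ℝ) (S T : Finset (Fin n)) :
    nrm1 (restr x S) = nrm1 (restr x (S ∩ T)) + nrm1 (restr x (S \ T)) := by
  rw [nrm1_restr, nrm1_restr, nrm1_restr, ← Finset.sum_union]
  · congr 1
    ext i; simp [Finset.mem_inter, Finset.mem_sdiff]; tauto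
  · exact Finset.disjoint_left.2 (by intro i hi hj; simp_all [Finset.mem_inter, Finset.mem_sdiff])

lemma restr_add {n : ℕ} (x y : Fin n → ℝ) (S : Finset (Fin n)) :
    restr (x + y) S = restr x S + restr y S := by
  funext i; simp only [restr, Pi.add_apply]; split <;> simp

lemma nrm1_add_le {n : ℕ} (x y : Fin n → ℝ) : nrm1 (x + y) ≤ nrm1 x + nrm1 y := by
  unfold nrm1
  rw [← Finset.sum_add_distrib]
  exact Finset.sum_le_sum fun i _ => abs_add_le _ _

lemma nrm1_restr_rev {n : ℕ} (x h : Fin n → ℝ) (S : Finset (Fin n)) :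
    nrm1 (restr x S) - nrm1 (restr h S) ≤ nrm1 (restr (x + h) S) := by
  have := nrm1_add_le (restr (x+h) S) (restr (-h) S)
  rw [← restr_add] at this
  have e : x + h + -h = x := by ring
  rw [e] at this
  have : nrm1 (restr (-h) S) = nrm1 (restr h S) := by
    rw [nrm1_restr, nrm1_restr]; simp
  linarith [nrm1_add_le (restr (x+h) S) (restr (-h) S), this]

lemma nrm1_restr_rev' {n : ℕ} (x h : Fin n → ℝ) (S : Finset (Fin n)) :
    nrm1 (restr h S) - nrm1 (restr x S) ≤ nrm1 (restr (x + h) S) := by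
  have := nrm1_add_le (restr (x+h) S) (restr (-x) S)
  rw [← restr_add] at this
  have e : x + h + -x = h := by ring
  rw [e] at this
  have e2 : nrm1 (restr (-x) S) = nrm1 (restr x S) := by
    rw [nrm1_restr, nrm1_restr]; simp
  linarith

lemma nrm1_le_sqrt_card_mul_nrm2 {n : ℕ} (x : Fin n → ℝ) (S : Finset (Fin n)) :
    nrm1 (restr x S) ≤ Real.sqrt S.card * nrm2 (restr x S) := by
  rw [nrm1_restr, nrm2_restr]
  have cs : (∑ i ∈ S, |x i|) ^ 2 ≤ (S.card : ℝ) * ∑ i ∈ S, |x i| ^ 2 :=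
    sq_sum_le_card_mul_sum_sq
  have h1 : (∑ i ∈ S, |x i| ^ 2) = ∑ i ∈ S, x i ^ 2 := by
    apply Finset.sum_congr rfl; intro i _; rw [sq_abs]
  rw [h1] at cs
  have h2 : ∑ i ∈ S, |x i| = Real.sqrt ((∑ i ∈ S, |x i|) ^ 2) := by
    rw [Real.sqrt_sq (Finset.sum_nonneg fun _ _ => abs_nonneg _)]
  rw [h2]
  calc Real.sqrt ((∑ i ∈ S, |x i|) ^ 2) ≤ Real.sqrt ((S.card : ℝ) * ∑ i ∈ S, x i ^ 2) :=
        Real.sqrt_le_sqrt cs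
    _ = Real.sqrt S.card * Real.sqrt (∑ i ∈ S, x i ^ 2) := Real.sqrt_mul (Nat.cast_nonneg _) _

-- sum comparison for card-equal sets
lemma sum_le_sum_card_eq {ι : Type*} [DecidableEq ι] {A B : Finset ι} (f g : ι → ℝ)
    (hcard : A.card = B.card) (hle : ∀ i ∈ A, ∀ j ∈ B, f i ≤ g j) :
    ∑ i ∈ A, f i ≤ ∑ j ∈ B, g j := by
  rcases B.eq_empty_or_nonempty with hB | hB
  · subst hB
    simp only [Finset.card_empty, Finset.card_eq_zero] at hcard
    simp [hcard]
  · have hBim : (B.image g).Nonempty := hB.image g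
    set c := (B.image g).min' hBim with hc
    obtain ⟨b₀, hb₀, hgb₀⟩ := Finset.mem_image.1 ((B.image g).min'_mem hBim)
    have h1 : ∑ i ∈ A, f i ≤ A.card • c := by
      apply Finset.sum_le_card_nsmul
      intro i hi
      rw [hc, ← hgb₀]; exact hle i hi b₀ hb₀
    have h2 : B.card • c ≤ ∑ j ∈ B, g j := by
      apply Finset.card_nsmul_le_sum
      intro j hj
      exact Finset.min'_le _ _ (Finset.mem_image_of_mem g hj)
    rw [hcard] at h1
    exact h1.trans h2

-- existence of a top-k subset
lemma exists_top {ι : Type*} [DecidableEq ι] (f : ι → ℝ) :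
    ∀ (k : ℕ) (U : Finset ι), k ≤ U.card →
      ∃ T, T ⊆ U ∧ T.card = k ∧ ∀ i ∈ U \ T, ∀ j ∈ T, f i ≤ f j := by
  intro k
  induction k with
  | zero => intro U _; exact ⟨∅, Finset.empty_subset U, rfl, by simp⟩
  | succ k ih =>
      intro U hk
      obtain ⟨T, hTU, hTc, hTtop⟩ := ih U (Nat.le_of_succ_le hk)
      have hne : (U \ T).Nonempty := by
        rw [← Finset.card_pos, Finset.card_sdiff_of_subset hTU, hTc]
        omega
      obtain ⟨j₀, hj₀, hj₀max⟩ := Finset.exists_max_image (U \ T) f hne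
      refine ⟨insert j₀ T, ?_, ?_, ?_⟩
      · exact Finset.insert_subset (Finset.mem_sdiff.1 hj₀).1 hTU
      · rw [Finset.card_insert_of_notMem (Finset.mem_sdiff.1 hj₀).2, hTc]
      · intro i hi j hj
        have hi' : i ∈ U \ T := by
          rw [Finset.mem_sdiff] at hi ⊢
          exact ⟨hi.1, fun h => hi.2 (Finset.mem_insert_of_mem h)⟩
        rcases Finset.mem_insert.1 hj with rfl | hj
        · exact hj₀max i hi'
        · exact hTtop i hi' j hj

-- top set maximizes sum of squares
lemma top_max_sum_sq {n : ℕ} (h : Fin n → ℝ) (k : ℕ) (U T W : Finset (Fin n))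
    (hTU : T ⊆ U) (hTc : T.card = min k U.card)
    (htop : ∀ i ∈ U \ T, ∀ j ∈ T, |h i| ≤ |h j|)
    (hWU : W ⊆ U) (hWc : W.card ≤ k) :
    ∑ i ∈ W, (h i) ^ 2 ≤ ∑ i ∈ T, (h i) ^ 2 := by
  by_cases hUk : U.card ≤ k
  · have : T = U := by
      apply Finset.eq_of_subset_of_card_le hTU
      rw [hTc]; omega
    subst this
    exact Finset.sum_le_sum_of_subset_of_nonneg hWU fun _ _ _ => sq_nonneg _
  · push_neg at hUk
    have hTk : T.card = k := by rw [hTc]; omega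
    -- compare W \ T with a subset of T \ W
    have hcard : (W \ T).card ≤ (T \ W).card := by
      have h1 := Finset.card_sdiff_add_card_inter W T
      have h2 := Finset.card_sdiff_add_card_inter T W
      have h3 : (W ∩ T).card = (T ∩ W).card := by rw [Finset.inter_comm]
      have h4 : (W ∩ T).card ≤ W.card := Finset.card_le_card (Finset.inter_subset_left)
      omega
    obtain ⟨V, hVsub, hVcard⟩ := Finset.exists_subset_card_eq hcard
    have key : ∑ i ∈ W \ T, (h i)^2 ≤ ∑ j ∈ V, (h j)^2 := by
      apply sum_le_sum_card_eq _ _ hVcard.symm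
      intro i hi j hj
      have hiUT : i ∈ U \ T := by
        rw [Finset.mem_sdiff] at hi ⊢; exact ⟨hWU hi.1, hi.2⟩
      have hjT : j ∈ T := (Finset.mem_sdiff.1 (hVsub hj)).1
      have := htop i hiUT j hjT
      calc (h i)^2 = |h i|^2 := (sq_abs _).symm
        _ ≤ |h j|^2 := by apply pow_le_pow_left₀ (abs_nonneg _) this
        _ = (h j)^2 := sq_abs _
    have split1 : ∑ i ∈ W, (h i)^2 = ∑ i ∈ W ∩ T, (h i)^2 + ∑ i ∈ W \ T, (h i)^2 := by
      rw [← Finset.sum_union (Finset.disjoint_sdiff_inter W T).symm]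
      · congr 1; ext i; simp [Finset.mem_union, Finset.mem_inter, Finset.mem_sdiff]; tauto
    have split2 : ∑ i ∈ W ∩ T, (h i)^2 + ∑ j ∈ V, (h j)^2 ≤ ∑ i ∈ T, (h i)^2 := by
      have hdisj : Disjoint (W ∩ T) V := by
        apply Finset.disjoint_left.2
        intro a ha hav
        exact (Finset.mem_sdiff.1 (hVsub hav)).2 (Finset.mem_inter.1 ha).1
      rw [← Finset.sum_union hdisj]
      apply Finset.sum_le_sum_of_subset_of_nonneg
      · apply Finset.union_subset (Finset.inter_subset_right)
        exact hVsub.trans (Finset.sdiff_subset)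
      · exact fun _ _ _ => sq_nonneg _
    linarith

lemma restr_add_restr_sdiff {n : ℕ} (h : Fin n → ℝ) {T V : Finset (Fin n)} (hTV : T ⊆ V) :
    restr h T + restr h (V \ T) = restr h V := by
  funext i
  simp only [restr, Pi.add_apply, Finset.mem_sdiff]
  by_cases hiT : i ∈ T
  · simp [hiT, hTV hiT]
  · by_cases hiV : i ∈ V <;> simp [hiT, hiV]

lemma shelling {n : ℕ} (h : Fin n → ℝ) (k : ℕ) (hk : 0 < k) :
    ∀ (U : Finset (Fin n)), ∃ (T₁ : Finset (Fin n)) (L : List (Finset (Fin n))),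
      T₁ ⊆ U ∧ T₁.card = min k U.card ∧
      (∀ i ∈ U \ T₁, ∀ j ∈ T₁, |h i| ≤ |h j|) ∧
      (∀ S ∈ L, S.card ≤ k) ∧
      (L.map (fun S => restr h S)).sum = restr h (U \ T₁) ∧
      (L.map (fun S => nrm2 (restr h S))).sum ≤ nrm1 (restr h U) / Real.sqrt k := by
  intro U
  induction U using Finset.strongInduction with
  | _ U ih =>
  have hksqrt : (0:ℝ) < Real.sqrt k := Real.sqrt_pos.2 (by exact_mod_cast hk)
  by_cases hUk : U.card ≤ k
  · refine ⟨U, [], Finset.Subset.refl U, by omega, by simp, by simp, ?_, ?_⟩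
    · funext i; simp [restr]
    · simp
      exact div_nonneg (nrm1_nonneg _) hksqrt.le
  · push_neg at hUk
    obtain ⟨T₁, hT₁U, hT₁c, hT₁top⟩ := exists_top (fun i => |h i|) k U hUk.le
    have hUT₁ : U \ T₁ ⊂ U := by
      apply Finset.sdiff_ssubset hT₁U
      rw [← Finset.card_pos, hT₁c]; omega
    obtain ⟨T₂, L', hT₂sub, hT₂c, _, hL'card, hL'sum, hL'nrm⟩ := ih (U \ T₁) hUT₁
    refine ⟨T₁, T₂ :: L', hT₁U, by omega, hT₁top, ?_, ?_, ?_⟩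
    · intro S hS
      rcases List.mem_cons.1 hS with rfl | hS
      · rw [hT₂c]; omega
      · exact hL'card S hS
    · simp only [List.map_cons, List.sum_cons, hL'sum]
      exact restr_add_restr_sdiff h hT₂sub
    · simp only [List.map_cons, List.sum_cons]
      -- bound nrm2 (restr h T₂)
      have hT₁k : T₁.card = k := by omega
      set c : ℝ := nrm1 (restr h T₁) / k with hc
      have hcnn : 0 ≤ c := by
        apply div_nonneg (nrm1_nonneg _) (by positivity)
      have hbd : ∀ i ∈ T₂, |h i| ≤ c := by
        intro i hi
        have hiUT : i ∈ U \ T₁ := hT₂sub hi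
        have : (k:ℝ) * |h i| ≤ nrm1 (restr h T₁) := by
          rw [nrm1_restr]
          calc (k:ℝ) * |h i| = ∑ _j ∈ T₁, |h i| := by
                rw [Finset.sum_const, hT₁k]; ring
            _ ≤ ∑ j ∈ T₁, |h j| := Finset.sum_le_sum fun j hj => hT₁top i hiUT j hj
        rw [hc, le_div_iff₀ (by exact_mod_cast hk)]
        linarith [this]
      have hT₂bd : nrm2 (restr h T₂) ≤ Real.sqrt k * c := by
        rw [nrm2_restr]
        have : ∑ i ∈ T₂, (h i)^2 ≤ (k:ℝ) * c^2 := by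
          calc ∑ i ∈ T₂, (h i)^2 ≤ ∑ i ∈ T₂, c^2 := by
                apply Finset.sum_le_sum
                intro i hi
                calc (h i)^2 = |h i|^2 := (sq_abs _).symm
                  _ ≤ c^2 := pow_le_pow_left₀ (abs_nonneg _) (hbd i hi) 2
            _ = T₂.card * c^2 := by rw [Finset.sum_const]; ring
            _ ≤ (k:ℝ) * c^2 := by
                apply mul_le_mul_of_nonneg_right _ (sq_nonneg _)
                exact_mod_cast (by omega : T₂.card ≤ k)
        calc Real.sqrt (∑ i ∈ T₂, (h i)^2) ≤ Real.sqrt ((k:ℝ) * c^2) := Real.sqrt_le_sqrt this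
          _ = Real.sqrt k * c := by
              rw [Real.sqrt_mul (by positivity), Real.sqrt_sq hcnn]
      have hsplit : nrm1 (restr h U) = nrm1 (restr h T₁) + nrm1 (restr h (U \ T₁)) := by
        rw [nrm1_restr, nrm1_restr, nrm1_restr, ← Finset.sum_union Finset.disjoint_sdiff]
        congr 1
        rw [Finset.union_sdiff_of_subset hT₁U]
      have hc2 : Real.sqrt k * c = nrm1 (restr h T₁) / Real.sqrt k := by
        rw [hc]
        rw [eq_div_iff (ne_of_gt hksqrt)]
        have hss : Real.sqrt k * Real.sqrt k = (k:ℝ) := Real.mul_self_sqrt (by positivity)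
        field_simp
        linear_combination nrm1 (restr h T₁) * hss
      rw [hsplit, add_div]
      linarith [hL'nrm, hT₂bd, hc2.le]

lemma restr_univ {n : ℕ} (h : Fin n → ℝ) : restr h Finset.univ = h := by
  funext i; simp [restr]

lemma support_restr_card_le {n : ℕ} (v : Fin n → ℝ) (S : Finset (Fin n)) :
    (Finset.univ.filter fun i => restr v S i ≠ 0).card ≤ S.card := by
  apply Finset.card_le_card
  intro i hi
  rw [Finset.mem_filter] at hi
  by_contra hiS
  exact hi.2 (by simp [restr, hiS])

lemma rip_upper {m n : ℕ} {A : Matrix (Fin m) (Fin n) ℝ} {δ : ℝ} {k : ℕ}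
    (hR : RIPBound A δ k) (hδ : 0 ≤ 1 + δ) (v : Fin n → ℝ)
    (hsupp : (Finset.univ.filter fun i => v i ≠ 0).card ≤ k) :
    nrm2 (A.mulVec v) ≤ Real.sqrt (1 + δ) * nrm2 v := by
  have h2 := (hR v hsupp).2
  have h3 : nrm2 (A.mulVec v) = Real.sqrt ((nrm2 (A.mulVec v))^2) :=
    (Real.sqrt_sq (nrm2_nonneg _)).symm
  rw [h3]
  calc Real.sqrt ((nrm2 (A.mulVec v))^2) ≤ Real.sqrt ((1+δ) * (nrm2 v)^2) :=
        Real.sqrt_le_sqrt h2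
    _ = Real.sqrt (1+δ) * nrm2 v := by
        rw [Real.sqrt_mul hδ, Real.sqrt_sq (nrm2_nonneg _)]

lemma rip_lower {m n : ℕ} {A : Matrix (Fin m) (Fin n) ℝ} {δ : ℝ} {k : ℕ}
    (hR : RIPBound A δ k) (hδ : 0 ≤ 1 - δ) (v : Fin n → ℝ)
    (hsupp : (Finset.univ.filter fun i => v i ≠ 0).card ≤ k) :
    Real.sqrt (1 - δ) * nrm2 v ≤ nrm2 (A.mulVec v) := by
  have h2 := (hR v hsupp).1
  calc Real.sqrt (1-δ) * nrm2 v = Real.sqrt ((1-δ) * (nrm2 v)^2) := by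
        rw [Real.sqrt_mul hδ, Real.sqrt_sq (nrm2_nonneg _)]
    _ ≤ Real.sqrt ((nrm2 (A.mulVec v))^2) := Real.sqrt_le_sqrt h2
    _ = nrm2 (A.mulVec v) := Real.sqrt_sq (nrm2_nonneg _)

lemma mulVec_list_sum {m n : ℕ} (A : Matrix (Fin m) (Fin n) ℝ) (L : List (Fin n → ℝ)) :
    A.mulVec L.sum = (L.map A.mulVec).sum := by
  induction L with
  | nil => simp [Matrix.mulVec_zero]
  | cons a l ih => simp [Matrix.mulVec_add, ih]

set_option maxHeartbeats 1000000 in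
/-- single-weight weighted ℓ1-minimization recovery guarantee
(Friedlander et al.). -/
theorem weighted_l1_recovery_single_weight
    {m n s : ℕ} (hs : 0 < s)
    (x : Fin n → ℝ) (T₀ : Finset (Fin n)) (hT₀card : T₀.card = s)
    (hT₀top : ∀ i ∉ T₀, ∀ j ∈ T₀, |x i| ≤ |x j|)
    (Tt : Finset (Fin n)) (ρ α : ℝ)
    (hρ : (Tt.card : ℝ) = ρ * s) (hα : ((Tt ∩ T₀).card : ℝ) = α * (ρ * s))
    (w : ℝ) (hw0 : 0 ≤ w) (hw1 : w ≤ 1)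
    (b : ℝ) (hb : b = w + (1 - w) * Real.sqrt (1 + ρ - 2 * α * ρ))
    (a : ℝ) (ha : 1 < a) (as : ℕ) (has : 0 < as) (hasval : (as : ℝ) = a * s)
    (hra : (1 - α) * ρ ≤ a)
    (A : Matrix (Fin m) (Fin n) ℝ) (δas δa1s : ℝ)
    (hδas0 : 0 ≤ δas) (hδas1 : δas < 1) (hδa1s0 : 0 ≤ δa1s) (hδa1s1 : δa1s < 1)
    (hRIP1 : RIPBound A δas as) (hRIP2 : RIPBound A δa1s (as + s))
    (hcond : δas + (a / b ^ 2) * δa1s < a / b ^ 2 - 1)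
    (z : Fin m → ℝ) (ε : ℝ) (hz : nrm2 z ≤ ε)
    (y : Fin m → ℝ) (hy : y = A.mulVec x + z)
    (xh : Fin n → ℝ) (hfeas : nrm2 (A.mulVec xh - y) ≤ ε)
    (hmin : w * nrm1 (restr xh Tt) + nrm1 (restr xh Ttᶜ) ≤
      w * nrm1 (restr x Tt) + nrm1 (restr x Ttᶜ)) :
    nrm2 (xh - x) ≤
      2 * (1 + b / Real.sqrt a) /
          (Real.sqrt (1 - δa1s) - b / Real.sqrt a * Real.sqrt (1 + δas)) * ε +
      2 / Real.sqrt a * (Real.sqrt (1 - δa1s) + Real.sqrt (1 + δas)) /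
          (Real.sqrt (1 - δa1s) - b / Real.sqrt a * Real.sqrt (1 + δas)) *
        (Real.sqrt (s : ℝ))⁻¹ *
        (w * nrm1 (restr x T₀ᶜ) + (1 - w) * nrm1 (restr x (Ttᶜ ∩ T₀ᶜ))) := by
  have hw' : (0:ℝ) ≤ 1 - w := by linarith
  have hεnn : 0 ≤ ε := le_trans (nrm2_nonneg z) hz
  have hspos : (0:ℝ) < s := by exact_mod_cast hs
  set h := xh - x with hh
  have hxh : xh = x + h := by rw [hh]; abel
  set ξ := w * nrm1 (restr x T₀ᶜ) + (1 - w) * nrm1 (restr x (Ttᶜ ∩ T₀ᶜ)) with hξdef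
  have hξnn : 0 ≤ ξ := add_nonneg (mul_nonneg hw0 (nrm1_nonneg _))
    (mul_nonneg hw' (nrm1_nonneg _))
  -- cardinalities
  have h1 : ((T₀ \ Tt).card:ℝ) = s - α*(ρ*s) := by
    have e : (T₀ \ Tt).card + (Tt ∩ T₀).card = s := by
      rw [Finset.inter_comm, Finset.card_sdiff_add_card_inter, hT₀card]
    have e' : ((T₀ \ Tt).card:ℝ) + ((Tt ∩ T₀).card:ℝ) = s := by exact_mod_cast e
    linarith [hα]
  have h2 : ((Tt \ T₀).card:ℝ) = ρ*s - α*(ρ*s) := by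
    have e : (Tt \ T₀).card + (Tt ∩ T₀).card = Tt.card :=
      Finset.card_sdiff_add_card_inter Tt T₀
    have e' : ((Tt \ T₀).card:ℝ) + ((Tt ∩ T₀).card:ℝ) = Tt.card := by exact_mod_cast e
    linarith [hα, hρ]
  set E := (T₀ \ Tt) ∪ (Tt \ T₀) with hE
  have hEdisj : Disjoint (T₀ \ Tt) (Tt \ T₀) := by
    rw [Finset.disjoint_left]; intro i hi hj
    exact (Finset.mem_sdiff.1 hj).2 (Finset.mem_sdiff.1 hi).1
  have hEcard : (E.card:ℝ) = (1 + ρ - 2*α*ρ) * s := by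
    rw [hE, Finset.card_union_of_disjoint hEdisj]
    push_cast
    have : α*(ρ*s) = α*ρ*s := by ring
    linarith [h1, h2]
  have hrnn : (0:ℝ) ≤ 1 + ρ - 2*α*ρ := by
    by_contra hneg
    push_neg at hneg
    have h0 : ((E.card:ℝ)) < 0 := by
      rw [hEcard]; exact mul_neg_of_neg_of_pos hneg hspos
    exact absurd h0 (not_lt.2 (Nat.cast_nonneg _))
  -- b positivity
  have hbnn : 0 ≤ b := by
    rw [hb]; exact add_nonneg hw0 (mul_nonneg hw' (Real.sqrt_nonneg _))
  have hbpos : 0 < b := by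
    rcases eq_or_lt_of_le hbnn with heq | hlt
    · exfalso
      rw [← heq] at hcond
      norm_num at hcond
      linarith
    · exact hlt
  -- sqrt facts
  have hsa1 : 1 < Real.sqrt a := by
    rw [show (1:ℝ) = Real.sqrt 1 from Real.sqrt_one.symm]
    exact Real.sqrt_lt_sqrt (by norm_num) ha
  have hsapos : (0:ℝ) < Real.sqrt a := by linarith
  have hsspos : (0:ℝ) < Real.sqrt (s:ℝ) := Real.sqrt_pos.2 hspos
  have hPpos : (0:ℝ) < Real.sqrt (1 + δas) := Real.sqrt_pos.2 (by linarith)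
  have hQpos : (0:ℝ) < Real.sqrt (1 - δa1s) := Real.sqrt_pos.2 (by linarith)
  have hsasq : Real.sqrt a * Real.sqrt a = a := Real.mul_self_sqrt (by linarith)
  have hsssq : Real.sqrt (s:ℝ) * Real.sqrt (s:ℝ) = (s:ℝ) := Real.mul_self_sqrt hspos.le
  have hPsq : Real.sqrt (1 + δas) * Real.sqrt (1 + δas) = 1 + δas :=
    Real.mul_self_sqrt (by linarith)
  have hQsq : Real.sqrt (1 - δa1s) * Real.sqrt (1 - δa1s) = 1 - δa1s :=
    Real.mul_self_sqrt (by linarith)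
  have hE0pos : 0 < Real.sqrt a * Real.sqrt (1 - δa1s) - b * Real.sqrt (1 + δas) := by
    have hb2 : (0:ℝ) < b^2 := by positivity
    have hab : a / b^2 * b^2 = a := div_mul_cancel₀ a hb2.ne'
    have h5 : a * δa1s = a/b^2 * b^2 * δa1s := by rw [hab]
    have h6 : a = a/b^2*b^2 := hab.symm
    have key : b^2*(1+δas) < a*(1-δa1s) := by
      have hmul := mul_pos (sub_pos.2 hcond) hb2
      linarith [hmul, h5, h6]
    have hv2 : (b * Real.sqrt (1 + δas))^2 = b^2*(1+δas) := by
      rw [mul_pow, Real.sq_sqrt (by linarith : (0:ℝ) ≤ 1 + δas)]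
    have hu2 : (Real.sqrt a * Real.sqrt (1 - δa1s))^2 = a*(1-δa1s) := by
      rw [mul_pow, Real.sq_sqrt (by linarith : (0:ℝ) ≤ a),
        Real.sq_sqrt (by linarith : (0:ℝ) ≤ 1 - δa1s)]
    have hsq : (b * Real.sqrt (1 + δas))^2 < (Real.sqrt a * Real.sqrt (1 - δa1s))^2 := by
      rw [hv2, hu2]; exact key
    have hlt := lt_of_pow_lt_pow_left₀ 2
      (by positivity : (0:ℝ) ≤ Real.sqrt a * Real.sqrt (1 - δa1s)) hsq
    linarith
  -- set identities
  have e1 : Ttᶜ ∩ T₀ = T₀ \ Tt := by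
    (ext i; simp only [Finset.mem_inter, Finset.mem_compl, Finset.mem_sdiff]) <;> tauto
  have e2 : Ttᶜ \ T₀ = Ttᶜ ∩ T₀ᶜ := by
    (ext i; simp only [Finset.mem_inter, Finset.mem_compl, Finset.mem_sdiff]) <;> tauto
  have e3 : T₀ᶜ ∩ Tt = Tt \ T₀ := by
    (ext i; simp only [Finset.mem_inter, Finset.mem_compl, Finset.mem_sdiff]) <;> tauto
  have e4 : T₀ᶜ \ Tt = Ttᶜ ∩ T₀ᶜ := by
    (ext i; simp only [Finset.mem_inter, Finset.mem_compl, Finset.mem_sdiff]) <;> tauto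
  -- cone condition
  rw [hxh] at hmin
  have s1 := nrm1_split (x+h) Tt
  have s2 := nrm1_split x Tt
  have ws1 : w * nrm1 (x+h) = w * nrm1 (restr (x+h) Tt) + w * nrm1 (restr (x+h) Ttᶜ) := by
    rw [s1]; ring
  have ws2 : w * nrm1 x = w * nrm1 (restr x Tt) + w * nrm1 (restr x Ttᶜ) := by
    rw [s2]; ring
  have hmin' : w * nrm1 (x+h) + (1-w)*nrm1 (restr (x+h) Ttᶜ) ≤
      w*nrm1 x + (1-w)*nrm1 (restr x Ttᶜ) := by linarith [hmin, ws1, ws2]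
  have s3 := nrm1_split (x+h) T₀
  have r1 := nrm1_restr_rev x h T₀
  have r2 := nrm1_restr_rev' x h T₀ᶜ
  have s4 := nrm1_split_inter (x+h) Ttᶜ T₀
  rw [e1, e2] at s4
  have s5 := nrm1_split_inter x Ttᶜ T₀
  rw [e1, e2] at s5
  have r3 := nrm1_restr_rev x h (T₀ \ Tt)
  have r4 := nrm1_restr_rev' x h (Ttᶜ ∩ T₀ᶜ)
  have s6 := nrm1_split x T₀
  have P1 : w*(nrm1 (restr x T₀) - nrm1 (restr h T₀) +
      (nrm1 (restr h T₀ᶜ) - nrm1 (restr x T₀ᶜ))) ≤ w * nrm1 (x+h) :=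
    mul_le_mul_of_nonneg_left (by linarith [s3, r1, r2]) hw0
  have P2 : (1-w)*(nrm1 (restr x (T₀ \ Tt)) - nrm1 (restr h (T₀ \ Tt)) +
      (nrm1 (restr h (Ttᶜ ∩ T₀ᶜ)) - nrm1 (restr x (Ttᶜ ∩ T₀ᶜ)))) ≤
      (1-w)*nrm1 (restr (x+h) Ttᶜ) := by
    have r5 := nrm1_restr_rev x h (Ttᶜ ∩ T₀ᶜ)
    exact mul_le_mul_of_nonneg_left (by linarith [s4, r3, r4]) hw'
  have star : w*nrm1 (restr h T₀ᶜ) + (1-w)*nrm1 (restr h (Ttᶜ ∩ T₀ᶜ)) ≤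
      w*nrm1 (restr h T₀) + (1-w)*nrm1 (restr h (T₀ \ Tt)) + 2*ξ := by
    have ws5 : (1-w) * nrm1 (restr x Ttᶜ) = (1-w) * nrm1 (restr x (T₀ \ Tt)) +
        (1-w) * nrm1 (restr x (Ttᶜ ∩ T₀ᶜ)) := by rw [s5]; ring
    have ws6 : w * nrm1 x = w * nrm1 (restr x T₀) + w * nrm1 (restr x T₀ᶜ) := by
      rw [s6]; ring
    rw [hξdef]; linarith [hmin', P1, P2, ws5, ws6]
  have s7 := nrm1_split_inter h T₀ᶜ Tt
  rw [e3, e4] at s7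
  have s8 : nrm1 (restr h E) = nrm1 (restr h (T₀ \ Tt)) + nrm1 (restr h (Tt \ T₀)) := by
    rw [hE]; exact nrm1_restr_union h hEdisj
  have cone : nrm1 (restr h T₀ᶜ) ≤ w * nrm1 (restr h T₀) + (1-w)*nrm1 (restr h E) + 2*ξ := by
    have ws7 : (1-w) * nrm1 (restr h T₀ᶜ) = (1-w) * nrm1 (restr h (Tt \ T₀)) +
        (1-w) * nrm1 (restr h (Ttᶜ ∩ T₀ᶜ)) := by rw [s7]; ring
    have ws8 : (1-w) * nrm1 (restr h E) = (1-w) * nrm1 (restr h (T₀ \ Tt)) +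
        (1-w) * nrm1 (restr h (Tt \ T₀)) := by rw [s8]; ring
    linarith [star, ws7, ws8]
  -- Cauchy-Schwarz step
  have csT₀ : nrm1 (restr h T₀) ≤ Real.sqrt (s:ℝ) * nrm2 (restr h T₀) := by
    have hcs := nrm1_le_sqrt_card_mul_nrm2 h T₀
    rw [hT₀card] at hcs; exact hcs
  have csE : nrm1 (restr h E) ≤
      Real.sqrt (1 + ρ - 2*α*ρ) * Real.sqrt (s:ℝ) * nrm2 (restr h E) := by
    have hcs := nrm1_le_sqrt_card_mul_nrm2 h E
    rw [hEcard, Real.sqrt_mul hrnn] at hcs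
    linarith [hcs]
  have hsubE : E ⊆ T₀ ∪ Tt := by
    intro i hi
    rcases Finset.mem_union.1 hi with hi | hi
    · exact Finset.mem_union_left _ (Finset.mem_sdiff.1 hi).1
    · exact Finset.mem_union_right _ (Finset.mem_sdiff.1 hi).1
  have monT : nrm2 (restr h T₀) ≤ nrm2 (restr h (T₀ ∪ Tt)) :=
    nrm2_restr_mono h Finset.subset_union_left
  have monE : nrm2 (restr h E) ≤ nrm2 (restr h (T₀ ∪ Tt)) := nrm2_restr_mono h hsubE
  have cone2 : nrm1 (restr h T₀ᶜ) ≤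
      b * Real.sqrt (s:ℝ) * nrm2 (restr h (T₀ ∪ Tt)) + 2*ξ := by
    have q1 : w * nrm1 (restr h T₀) ≤ w * (Real.sqrt (s:ℝ) * nrm2 (restr h (T₀ ∪ Tt))) :=
      mul_le_mul_of_nonneg_left
        (csT₀.trans (mul_le_mul_of_nonneg_left monT hsspos.le)) hw0
    have q2 : (1-w) * nrm1 (restr h E) ≤ (1-w) *
        (Real.sqrt (1 + ρ - 2*α*ρ) * Real.sqrt (s:ℝ) * nrm2 (restr h (T₀ ∪ Tt))) :=
      mul_le_mul_of_nonneg_left (csE.trans (mul_le_mul_of_nonneg_left monE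
        (mul_nonneg (Real.sqrt_nonneg _) hsspos.le))) hw'
    rw [hb]
    linarith [cone, q1, q2]
  -- shelling
  obtain ⟨T₁, L, hT₁sub, hT₁card, hT₁top, hLcard, hLsum, hLnrm⟩ := shelling h as has T₀ᶜ
  set tl := (L.map (fun S => nrm2 (restr h S))).sum with htl
  have htlnn : 0 ≤ tl := by
    apply List.sum_nonneg
    intro u hu
    obtain ⟨S, _, rfl⟩ := List.mem_map.1 hu
    exact nrm2_nonneg _
  have hXnn : 0 ≤ nrm2 (restr h (T₀ ∪ T₁)) := nrm2_nonneg _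
  have hassqrt : Real.sqrt (as:ℝ) = Real.sqrt a * Real.sqrt (s:ℝ) := by
    rw [hasval, Real.sqrt_mul (by linarith : (0:ℝ) ≤ a)]
  rw [hassqrt] at hLnrm
  have f1' : Real.sqrt a * Real.sqrt (s:ℝ) * tl ≤ nrm1 (restr h T₀ᶜ) := by
    have := (le_div_iff₀ (by positivity : (0:ℝ) < Real.sqrt a * Real.sqrt (s:ℝ))).1 hLnrm
    linarith [this]
  -- nrm2 (restr h (T₀∪Tt)) ≤ nrm2 (restr h (T₀∪T₁))
  have hTtT₀sub : Tt \ T₀ ⊆ T₀ᶜ := by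
    intro i hi; rw [Finset.mem_compl]; exact (Finset.mem_sdiff.1 hi).2
  have hWcard : (Tt \ T₀).card ≤ as := by
    have hcast : ((Tt \ T₀).card:ℝ) ≤ (as:ℝ) := by
      rw [hasval]
      linarith [h2, mul_le_mul_of_nonneg_right hra hspos.le]
    exact_mod_cast hcast
  have htopsum := top_max_sum_sq h as T₀ᶜ T₁ (Tt \ T₀) hT₁sub hT₁card hT₁top hTtT₀sub hWcard
  have hdisj2 : Disjoint T₀ T₁ := by
    rw [Finset.disjoint_left]; intro i hi hiT₁
    exact (Finset.mem_compl.1 (hT₁sub hiT₁)) hi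
  have hX'X : nrm2 (restr h (T₀ ∪ Tt)) ≤ nrm2 (restr h (T₀ ∪ T₁)) := by
    rw [nrm2_restr, nrm2_restr]
    apply Real.sqrt_le_sqrt
    have eu : T₀ ∪ Tt = T₀ ∪ (Tt \ T₀) := (Finset.union_sdiff_self_eq_union).symm
    have hdisj1 : Disjoint T₀ (Tt \ T₀) := Finset.disjoint_sdiff
    rw [eu, Finset.sum_union hdisj1, Finset.sum_union hdisj2]
    linarith [htopsum]
  have cone3 : nrm1 (restr h T₀ᶜ) ≤
      b * Real.sqrt (s:ℝ) * nrm2 (restr h (T₀ ∪ T₁)) + 2*ξ := by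
    have := mul_le_mul_of_nonneg_left hX'X (mul_nonneg hbnn hsspos.le)
    linarith [cone2, this]
  -- RIP steps
  have hA2 : nrm2 (A.mulVec h) ≤ 2*ε := by
    have hid : A.mulVec h = (A.mulVec xh - y) + z := by
      rw [hh, Matrix.mulVec_sub, hy]; abel
    rw [hid]; exact (nrm2_add_le _ _).trans (by linarith [hfeas, hz])
  have hcomp : T₀ᶜ = Finset.univ \ T₀ := by ext i; simp
  have hd1 : restr h T₀ + restr h T₀ᶜ = h := by
    have := restr_add_restr_sdiff h (Finset.subset_univ T₀)
    rw [restr_univ] at this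
    rw [hcomp]; exact this
  have hd2 : restr h T₁ + restr h (T₀ᶜ \ T₁) = restr h T₀ᶜ :=
    restr_add_restr_sdiff h hT₁sub
  have hd3 : restr h (T₀ ∪ T₁) = restr h T₀ + restr h T₁ := by
    funext i
    simp only [restr, Pi.add_apply, Finset.mem_union]
    by_cases h1' : i ∈ T₀
    · have h2' : i ∉ T₁ := Finset.disjoint_left.1 hdisj2 h1'
      simp [h1', h2']
    · by_cases h2' : i ∈ T₁ <;> simp [h1', h2']
  have hdecomp : h = restr h (T₀ ∪ T₁) + restr h (T₀ᶜ \ T₁) := by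
    calc h = restr h T₀ + restr h T₀ᶜ := hd1.symm
      _ = restr h T₀ + (restr h T₁ + restr h (T₀ᶜ \ T₁)) := by rw [hd2]
      _ = restr h (T₀ ∪ T₁) + restr h (T₀ᶜ \ T₁) := by rw [hd3]; abel
  have hr2 : A.mulVec (restr h (T₀ᶜ \ T₁)) = (L.map (fun S => A.mulVec (restr h S))).sum := by
    rw [← hLsum, mulVec_list_sum, List.map_map]
    rfl
  have hblock : nrm2 (A.mulVec (restr h (T₀ᶜ \ T₁))) ≤ Real.sqrt (1 + δas) * tl := by
    rw [hr2]
    have t1 := nrm2_list_sum_le (L.map (fun S => A.mulVec (restr h S)))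
    rw [List.map_map] at t1
    have t2 : (L.map (nrm2 ∘ fun S => A.mulVec (restr h S))).sum ≤
        (L.map (fun S => Real.sqrt (1 + δas) * nrm2 (restr h S))).sum := by
      apply List.sum_le_sum
      intro S hS
      exact rip_upper hRIP1 (by linarith) _
        ((support_restr_card_le h S).trans (hLcard S hS))
    have t3 : (L.map (fun S => Real.sqrt (1 + δas) * nrm2 (restr h S))).sum =
        Real.sqrt (1 + δas) * tl := by
      rw [htl]; exact List.sum_map_mul_left L _ _
    calc nrm2 ((L.map (fun S => A.mulVec (restr h S))).sum)
        ≤ (L.map (nrm2 ∘ fun S => A.mulVec (restr h S))).sum := t1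
      _ ≤ _ := t2
      _ = _ := t3
  have hsupp2 : (Finset.univ.filter fun i => restr h (T₀ ∪ T₁) i ≠ 0).card ≤ as + s := by
    refine (support_restr_card_le h _).trans ?_
    have hc1 : (T₀ ∪ T₁).card ≤ T₀.card + T₁.card := Finset.card_union_le _ _
    have hc2 : T₁.card ≤ as := by omega
    omega
  have hlowX : Real.sqrt (1 - δa1s) * nrm2 (restr h (T₀ ∪ T₁)) ≤
      nrm2 (A.mulVec (restr h (T₀ ∪ T₁))) :=
    rip_lower hRIP2 (by linarith) _ hsupp2
  have hpre : A.mulVec (restr h (T₀ ∪ T₁)) =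
      A.mulVec h - A.mulVec (restr h (T₀ᶜ \ T₁)) := by
    have hsum : A.mulVec h = A.mulVec (restr h (T₀ ∪ T₁)) + A.mulVec (restr h (T₀ᶜ \ T₁)) := by
      conv_lhs => rw [hdecomp]
      rw [Matrix.mulVec_add]
    rw [hsum]; abel
  have hup : Real.sqrt (1 - δa1s) * nrm2 (restr h (T₀ ∪ T₁)) ≤
      2*ε + Real.sqrt (1 + δas) * tl := by
    calc Real.sqrt (1 - δa1s) * nrm2 (restr h (T₀ ∪ T₁))
        ≤ nrm2 (A.mulVec (restr h (T₀ ∪ T₁))) := hlowX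
      _ = nrm2 (A.mulVec h - A.mulVec (restr h (T₀ᶜ \ T₁))) := by rw [hpre]
      _ ≤ nrm2 (A.mulVec h) + nrm2 (A.mulVec (restr h (T₀ᶜ \ T₁))) := nrm2_sub_le _ _
      _ ≤ 2*ε + Real.sqrt (1 + δas) * tl := by linarith [hA2, hblock]
  have tail2 : nrm2 (restr h (T₀ᶜ \ T₁)) ≤ tl := by
    have t1 := nrm2_list_sum_le (L.map (fun S => restr h S))
    rw [hLsum, List.map_map] at t1
    exact t1
  -- final split of nrm2 h
  have hZfin : nrm2 h ≤ nrm2 (restr h (T₀ ∪ T₁)) + nrm2 (restr h (T₀ᶜ \ T₁)) := by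
    have hA1' : (0:ℝ) ≤ ∑ i ∈ T₀ ∪ T₁, (h i)^2 :=
      Finset.sum_nonneg fun _ _ => sq_nonneg _
    have hA2' : (0:ℝ) ≤ ∑ i ∈ T₀ᶜ \ T₁, (h i)^2 :=
      Finset.sum_nonneg fun _ _ => sq_nonneg _
    have hdisj3 : Disjoint (T₀ ∪ T₁) (T₀ᶜ \ T₁) := by
      rw [Finset.disjoint_left]; intro i hi hj
      rw [Finset.mem_sdiff, Finset.mem_compl] at hj
      rcases Finset.mem_union.1 hi with hi | hi
      · exact hj.1 hi
      · exact hj.2 hi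
    have huniv : (Finset.univ : Finset (Fin n)) = (T₀ ∪ T₁) ∪ (T₀ᶜ \ T₁) := by
      ext i
      simp only [Finset.mem_univ, Finset.mem_union, Finset.mem_sdiff, Finset.mem_compl, true_iff]
      tauto
    have hnh : nrm2 h = Real.sqrt (∑ i ∈ T₀ ∪ T₁, (h i)^2 + ∑ i ∈ T₀ᶜ \ T₁, (h i)^2) := by
      rw [nrm2, ← Finset.sum_union hdisj3, ← huniv]
    rw [hnh, nrm2_restr, nrm2_restr]
    have key : ∑ i ∈ T₀ ∪ T₁, (h i)^2 + ∑ i ∈ T₀ᶜ \ T₁, (h i)^2 ≤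
        (Real.sqrt (∑ i ∈ T₀ ∪ T₁, (h i)^2) + Real.sqrt (∑ i ∈ T₀ᶜ \ T₁, (h i)^2))^2 := by
      have e : (Real.sqrt (∑ i ∈ T₀ ∪ T₁, (h i)^2) + Real.sqrt (∑ i ∈ T₀ᶜ \ T₁, (h i)^2))^2 =
          (∑ i ∈ T₀ ∪ T₁, (h i)^2) +
          2*(Real.sqrt (∑ i ∈ T₀ ∪ T₁, (h i)^2) * Real.sqrt (∑ i ∈ T₀ᶜ \ T₁, (h i)^2)) +
          (∑ i ∈ T₀ᶜ \ T₁, (h i)^2) := by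
        rw [add_sq, Real.sq_sqrt hA1', Real.sq_sqrt hA2']; ring
      have hmn : 0 ≤ Real.sqrt (∑ i ∈ T₀ ∪ T₁, (h i)^2) * Real.sqrt (∑ i ∈ T₀ᶜ \ T₁, (h i)^2) :=
        mul_nonneg (Real.sqrt_nonneg _) (Real.sqrt_nonneg _)
      linarith [e, hmn]
    calc Real.sqrt (∑ i ∈ T₀ ∪ T₁, (h i)^2 + ∑ i ∈ T₀ᶜ \ T₁, (h i)^2)
        ≤ Real.sqrt ((Real.sqrt (∑ i ∈ T₀ ∪ T₁, (h i)^2) +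
            Real.sqrt (∑ i ∈ T₀ᶜ \ T₁, (h i)^2))^2) := Real.sqrt_le_sqrt key
      _ = _ := Real.sqrt_sq (by positivity)
  -- final algebra
  have k1 : Real.sqrt a * Real.sqrt (s:ℝ) * tl ≤
      b * Real.sqrt (s:ℝ) * nrm2 (restr h (T₀ ∪ T₁)) + 2*ξ := by linarith [f1', cone3]
  have t1f : Real.sqrt (s:ℝ) * (Real.sqrt a * Real.sqrt (1 - δa1s) -
      b * Real.sqrt (1 + δas)) * nrm2 (restr h (T₀ ∪ T₁)) ≤
      2 * Real.sqrt a * Real.sqrt (s:ℝ) * ε + 2 * Real.sqrt (1 + δas) * ξ := by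
    have hy1 := mul_le_mul_of_nonneg_left hup
      (by positivity : (0:ℝ) ≤ Real.sqrt a * Real.sqrt (s:ℝ))
    have hy2 := mul_le_mul_of_nonneg_left k1 hPpos.le
    linarith [hy1, hy2]
  have t2f : nrm2 h ≤ nrm2 (restr h (T₀ ∪ T₁)) + tl := by linarith [hZfin, tail2]
  have t3f : Real.sqrt a * Real.sqrt (s:ℝ) * nrm2 h ≤
      (Real.sqrt a + b) * Real.sqrt (s:ℝ) * nrm2 (restr h (T₀ ∪ T₁)) + 2*ξ := by
    have hy3 := mul_le_mul_of_nonneg_left t2f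
      (by positivity : (0:ℝ) ≤ Real.sqrt a * Real.sqrt (s:ℝ))
    linarith [hy3, k1]
  have t4f := mul_le_mul_of_nonneg_left t3f hE0pos.le
  have t5f := mul_le_mul_of_nonneg_left t1f (by positivity : (0:ℝ) ≤ Real.sqrt a + b)
  have key' : Real.sqrt a * ((Real.sqrt a * Real.sqrt (1 - δa1s) - b * Real.sqrt (1 + δas)) *
      Real.sqrt (s:ℝ) * nrm2 h) ≤
      Real.sqrt a * (2 * (Real.sqrt a + b) * Real.sqrt (s:ℝ) * ε +
        2 * (Real.sqrt (1 + δas) + Real.sqrt (1 - δa1s)) * ξ) := by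
    linarith [t4f, t5f]
  have keyf := le_of_mul_le_mul_left key' hsapos
  -- rewrite goal
  have hDpos : 0 < Real.sqrt (1 - δa1s) - b / Real.sqrt a * Real.sqrt (1 + δas) := by
    rw [sub_pos, div_mul_eq_mul_div, div_lt_iff₀ hsapos]
    linarith [hE0pos]
  have hden : (0:ℝ) < (Real.sqrt a * Real.sqrt (1 - δa1s) - b * Real.sqrt (1 + δas)) *
      Real.sqrt (s:ℝ) := mul_pos hE0pos hsspos
  have final : nrm2 h ≤ (2 * (Real.sqrt a + b) * Real.sqrt (s:ℝ) * ε +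
      2 * (Real.sqrt (1 + δas) + Real.sqrt (1 - δa1s)) * ξ) /
      ((Real.sqrt a * Real.sqrt (1 - δa1s) - b * Real.sqrt (1 + δas)) * Real.sqrt (s:ℝ)) := by
    rw [le_div_iff₀ hden]
    linarith [keyf]
  have hc0 : 2 * (1 + b / Real.sqrt a) /
      (Real.sqrt (1 - δa1s) - b / Real.sqrt a * Real.sqrt (1 + δas)) =
      2 * (Real.sqrt a + b) /
      (Real.sqrt a * Real.sqrt (1 - δa1s) - b * Real.sqrt (1 + δas)) := by
    rw [div_eq_div_iff hDpos.ne' hE0pos.ne']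
    field_simp
  have hc1 : 2 / Real.sqrt a * (Real.sqrt (1 - δa1s) + Real.sqrt (1 + δas)) /
      (Real.sqrt (1 - δa1s) - b / Real.sqrt a * Real.sqrt (1 + δas)) =
      2 * (Real.sqrt (1 + δas) + Real.sqrt (1 - δa1s)) /
      (Real.sqrt a * Real.sqrt (1 - δa1s) - b * Real.sqrt (1 + δas)) := by
    rw [div_eq_div_iff hDpos.ne' hE0pos.ne']
    field_simp
    ring
  rw [hc0, hc1]
  refine final.trans (le_of_eq ?_)
  field_simp [hE0pos.ne', hsspos.ne']
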